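/- For k ≥ 2, the polynomial Hamiltonian H(x,y) = ½((x + y^k)² + (y + λ(x + y^k))²) is a proper function on ℝ² (i.e., H(x,y) → ∞ as ‖(x,y)‖ → ∞), and its only critical point is the origin. -/

import Mathlib

open Filter ContinuousLinearMap

theorem stmt19 (k : ℕ) (hk : 2 ≤ k) (lam : ℝ)
    (H : ℝ × ℝ → ℝ)
    (hH : ∀ p : ℝ × ℝ, H p =
      ((p.1 + p.2 ^ k) ^ 2 + (p.2 + lam * (p.1 + p.2 ^ k)) ^ 2) / 2) :
    Filter.Tendsto H (Filter.cocompact (ℝ × ℝ)) Filter.atTop ∧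
    (∀ p : ℝ × ℝ, fderiv ℝ H p = 0 ↔ p = (0, 0)) := by
  have hHeq : H = fun q : ℝ × ℝ =>
      ((q.1 + q.2 ^ k) ^ 2 + (q.2 + lam * (q.1 + q.2 ^ k)) ^ 2) / 2 := funext hH
  have hk0 : k ≠ 0 := by omega
  constructor
  · -- properness
    let F : Homeomorph (ℝ × ℝ) (ℝ × ℝ) :=
      { toFun := fun q => (q.1 + q.2 ^ k, q.2 + lam * (q.1 + q.2 ^ k))
        invFun := fun q => (q.1 - (q.2 - lam * q.1) ^ k, q.2 - lam * q.1)
        left_inv := fun q => by simp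
        right_inv := fun q => by simp
        continuous_toFun := by fun_prop
        continuous_invFun := by fun_prop }
    have hF : Tendsto F (cocompact (ℝ × ℝ)) (cocompact (ℝ × ℝ)) :=
      F.isClosedEmbedding.tendsto_cocompact
    have hg : Tendsto (fun q : ℝ × ℝ => (q.1 ^ 2 + q.2 ^ 2) / 2)
        (cocompact (ℝ × ℝ)) atTop := by
      have h1 : Tendsto (fun q : ℝ × ℝ => ‖q‖ ^ 2 / 2) (cocompact (ℝ × ℝ)) atTop :=
        Tendsto.atTop_div_const (by norm_num)
          ((tendsto_pow_atTop two_ne_zero).comp tendsto_norm_cocompact_atTop)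
      refine tendsto_atTop_mono (fun q => ?_) h1
      have : ‖q‖ ^ 2 ≤ q.1 ^ 2 + q.2 ^ 2 := by
        have h : ‖q‖ = max |q.1| |q.2| := rfl
        rw [h]
        rcases max_cases |q.1| |q.2| with ⟨he, _⟩ | ⟨he, _⟩ <;> rw [he] <;>
          nlinarith [sq_abs q.1, sq_abs q.2, sq_nonneg q.1, sq_nonneg q.2]
      linarith
    have hco : H = (fun q : ℝ × ℝ => (q.1 ^ 2 + q.2 ^ 2) / 2) ∘ F := by
      rw [hHeq]; funext q; rfl
    rw [hco]
    exact hg.comp hF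
  · intro p
    set u : ℝ := p.1 + p.2 ^ k with hu
    set v : ℝ := p.2 + lam * u with hv
    set w : ℝ := u + lam * v with hw
    set s : ℝ := (k : ℝ) * p.2 ^ (k - 1) with hs
    set Dx : ℝ × ℝ →L[ℝ] ℝ := ContinuousLinearMap.fst ℝ ℝ ℝ
    set Dy : ℝ × ℝ →L[ℝ] ℝ := ContinuousLinearMap.snd ℝ ℝ ℝ
    have hpow : HasFDerivAt (fun q : ℝ × ℝ => q.2 ^ k) (s • Dy) p := by
      simpa [hs, smul_smul, Function.comp_def] using
        (hasDerivAt_pow k p.2).comp_hasFDerivAt p hasFDerivAt_snd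
    have hdu : HasFDerivAt (fun q : ℝ × ℝ => q.1 + q.2 ^ k) (Dx + s • Dy) p :=
      hasFDerivAt_fst.add hpow
    have hdv : HasFDerivAt (fun q : ℝ × ℝ => q.2 + lam * (q.1 + q.2 ^ k))
        (Dy + lam • (Dx + s • Dy)) p := hasFDerivAt_snd.add (hdu.const_mul lam)
    have hdH : HasFDerivAt H (w • Dx + (w * s + v) • Dy) p := by
      rw [hHeq]
      simp only [pow_two, div_eq_mul_inv]
      have h1 := ((hdu.mul hdu).add (hdv.mul hdv)).mul_const ((2 : ℝ)⁻¹)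
      refine h1.congr_fderiv ?_
      ext
      · simp [Dx, Dy, hw, hv, hu]
        ring
      · simp [Dx, Dy, hw, hv, hu]
        ring
    rw [hdH.fderiv]
    constructor
    · intro h0
      have e1 : w = 0 := by
        have := congrFun (congrArg (fun (L : ℝ × ℝ →L[ℝ] ℝ) => (L : ℝ × ℝ → ℝ)) h0) (1, 0)
        simpa [Dx, Dy] using this
      have e2 : w * s + v = 0 := by
        have := congrFun (congrArg (fun (L : ℝ × ℝ →L[ℝ] ℝ) => (L : ℝ × ℝ → ℝ)) h0) (0, 1)
        simpa [Dx, Dy] using this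
      have hv0 : v = 0 := by rw [e1] at e2; linarith
      have hu0 : u = 0 := by
        have h3 := hw
        rw [e1, hv0, mul_zero, add_zero] at h3
        exact h3.symm
      have hp2 : p.2 = 0 := by
        have := hv
        rw [hv0, hu0] at this
        linarith
      have hp1 : p.1 = 0 := by
        have := hu
        rw [hu0, hp2, zero_pow hk0] at this
        linarith
      exact Prod.ext hp1 hp2
    · intro hp
      have hp1 : p.1 = 0 := by rw [hp]
      have hp2 : p.2 = 0 := by rw [hp]
      have hu0 : u = 0 := by rw [hu, hp1, hp2, zero_pow hk0, add_zero]
      have hv0 : v = 0 := by rw [hv, hu0, hp2, mul_zero, add_zero]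
      have hw0 : w = 0 := by rw [hw, hu0, hv0, mul_zero, add_zero]
      rw [hw0, hv0, zero_mul, add_zero, zero_smul, zero_smul, add_zero]
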